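/- Let k be a field of characteristic 2 and β, α ∈ k with β ≠ 0. Let R = k[x,y,z]/(xy, x² - yz, y² - αyz - βxz). Then m^i = (z^i) for all i ≥ 3, and dim_k R_i = 1 for all i ≥ 3. -/

import Mathlib

set_option synthInstance.maxHeartbeats 400000
set_option maxHeartbeats 800000

open MvPolynomial

/-- The defining ideal `(xy, x² - yz, y² - αyz - βxz)` of the ring in Statement 7. -/
noncomputable def stmt7Ideal {k : Type*} [Field k] (α β : k) : Ideal (MvPolynomial (Fin 3) k) :=
  Ideal.span {X 0 * X 1, X 0 ^ 2 - X 1 * X 2,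
    X 1 ^ 2 - C α * (X 1 * X 2) - C β * (X 0 * X 2)}

/-- The degree-`i` homogeneous component of `R = k[x,y,z]/(xy, x²-yz, y²-αyz-βxz)`. -/
noncomputable def stmt7Piece {k : Type*} [Field k] (α β : k) (i : ℕ) :
    Submodule k (MvPolynomial (Fin 3) k ⧸ stmt7Ideal α β) :=
  (MvPolynomial.homogeneousSubmodule (Fin 3) k i).map
    (Ideal.Quotient.mkₐ k (stmt7Ideal α β)).toLinearMap

open Pointwise

section Aux
variable {k : Type*} [Field k] (α β : k)

local notation "Q" => Ideal.Quotient.mk (stmt7Ideal α β)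

lemma s7_hxy : Q (X 0) * Q (X 1) = 0 := by
  rw [← map_mul, Ideal.Quotient.eq_zero_iff_mem]
  exact Ideal.subset_span (by simp)

lemma s7_hx2 : Q (X 0) ^ 2 = Q (X 1) * Q (X 2) := by
  rw [← map_pow, ← map_mul]
  exact Ideal.Quotient.eq.2 (Ideal.subset_span (by simp))

lemma s7_hy2 : Q (X 1) ^ 2 =
    Q (C α) * (Q (X 1) * Q (X 2)) + Q (C β) * (Q (X 0) * Q (X 2)) := by
  have : Q (X 1 ^ 2) = Q (C α * (X 1 * X 2) + C β * (X 0 * X 2)) := by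
    refine Ideal.Quotient.eq.2 ?_
    have h : (X 1 ^ 2 : MvPolynomial (Fin 3) k) - (C α * (X 1 * X 2) + C β * (X 0 * X 2))
        = X 1 ^ 2 - C α * (X 1 * X 2) - C β * (X 0 * X 2) := by ring
    rw [h]
    exact Ideal.subset_span (by simp)
  simpa using this

lemma s7_hy2z : Q (X 1) ^ 2 * Q (X 2) = 0 := by
  linear_combination (Q (X 0)) * s7_hxy α β - (Q (X 1)) * s7_hx2 α β

variable (hβ : β ≠ 0)
include hβ

lemma s7_hbinv : Q (C β⁻¹) * Q (C β) = 1 := by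
  rw [← map_mul, ← C_mul, inv_mul_cancel₀ hβ, C_1, map_one]

lemma s7_hx2z : Q (X 0) ^ 2 * Q (X 2) = 0 := by
  have hb : Q (C β) * (Q (X 0) ^ 2 * Q (X 2)) = 0 := by
    linear_combination (Q (X 1)) * s7_hxy α β - (Q (X 0)) * s7_hy2 α β -
      (Q (C α)) * (Q (X 2)) * s7_hxy α β
  calc Q (X 0) ^ 2 * Q (X 2) = (Q (C β⁻¹) * Q (C β)) * (Q (X 0) ^ 2 * Q (X 2)) := by
        rw [s7_hbinv α β hβ, one_mul]
    _ = Q (C β⁻¹) * (Q (C β) * (Q (X 0) ^ 2 * Q (X 2))) := by ring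
    _ = 0 := by rw [hb, mul_zero]

lemma s7_hyz2 : Q (X 1) * Q (X 2) ^ 2 = 0 := by
  linear_combination s7_hx2z α β hβ - (Q (X 2)) * s7_hx2 α β

lemma s7_hxz2 : Q (X 0) * Q (X 2) ^ 2 = 0 := by
  have hb : Q (C β) * (Q (X 0) * Q (X 2) ^ 2) = 0 := by
    linear_combination s7_hy2z α β - (Q (C α)) * s7_hyz2 α β hβ - (Q (X 2)) * s7_hy2 α β
  calc Q (X 0) * Q (X 2) ^ 2 = (Q (C β⁻¹) * Q (C β)) * (Q (X 0) * Q (X 2) ^ 2) := by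
        rw [s7_hbinv α β hβ, one_mul]
    _ = Q (C β⁻¹) * (Q (C β) * (Q (X 0) * Q (X 2) ^ 2)) := by ring
    _ = 0 := by rw [hb, mul_zero]

omit hβ

lemma s7_hx3 : Q (X 0) ^ 3 = 0 := by
  linear_combination (Q (X 0)) * s7_hx2 α β + (Q (X 2)) * s7_hxy α β

lemma s7_hy3 : Q (X 1) ^ 3 = 0 := by
  linear_combination (Q (X 1)) * s7_hy2 α β + (Q (C α)) * s7_hy2z α β +
    (Q (C β)) * (Q (X 2)) * s7_hxy α β

/-- every monomial of degree ≥ 3 involving `x` or `y` vanishes. -/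
lemma s7_mono (hβ : β ≠ 0) : ∀ a b c : ℕ, 3 ≤ a + b + c → 0 < a + b →
    Q (X 0) ^ a * Q (X 1) ^ b * Q (X 2) ^ c = 0 := by
  intro a b c h3 hab
  rcases Nat.eq_zero_or_pos a with rfl | ha
  · -- a = 0, b ≥ 1
    match b, hab with
    | 1, _ =>
      obtain ⟨c', rfl⟩ : ∃ c', c = c' + 2 := ⟨c - 2, by omega⟩
      linear_combination (Q (X 2)) ^ c' * s7_hyz2 α β hβ
    | 2, _ =>
      obtain ⟨c', rfl⟩ : ∃ c', c = c' + 1 := ⟨c - 1, by omega⟩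
      linear_combination (Q (X 2)) ^ c' * s7_hy2z α β
    | (b' + 3), _ =>
      linear_combination (Q (X 1)) ^ b' * (Q (X 2)) ^ c * s7_hy3 α β
  · rcases Nat.eq_zero_or_pos b with rfl | hb
    · -- b = 0, a ≥ 1
      match a, ha with
      | 1, _ =>
        obtain ⟨c', rfl⟩ : ∃ c', c = c' + 2 := ⟨c - 2, by omega⟩
        linear_combination (Q (X 2)) ^ c' * s7_hxz2 α β hβ
      | 2, _ =>
        obtain ⟨c', rfl⟩ : ∃ c', c = c' + 1 := ⟨c - 1, by omega⟩
        linear_combination (Q (X 2)) ^ c' * s7_hx2z α β hβ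
      | (a' + 3), _ =>
        linear_combination (Q (X 0)) ^ a' * (Q (X 2)) ^ c * s7_hx3 α β
    · -- a ≥ 1, b ≥ 1
      obtain ⟨a', rfl⟩ : ∃ a', a = a' + 1 := ⟨a - 1, by omega⟩
      obtain ⟨b', rfl⟩ : ∃ b', b = b' + 1 := ⟨b - 1, by omega⟩
      linear_combination (Q (X 0)) ^ a' * (Q (X 1)) ^ b' * (Q (X 2)) ^ c * s7_hxy α β


lemma s7_zpow_ne (i : ℕ) : Q (X 2) ^ i ≠ 0 := by
  intro h
  have hmem : (X 2 : MvPolynomial (Fin 3) k) ^ i ∈ stmt7Ideal α β := by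
    rw [← Ideal.Quotient.eq_zero_iff_mem, map_pow]; exact h
  set φ : MvPolynomial (Fin 3) k →ₐ[k] k := aeval ![0, 0, 1] with hφ
  have hker : stmt7Ideal α β ≤ RingHom.ker φ.toRingHom := by
    rw [stmt7Ideal, Ideal.span_le]
    rintro p hp
    simp only [Set.mem_insert_iff, Set.mem_singleton_iff] at hp
    rcases hp with rfl | rfl | rfl <;>
      simp [hφ, RingHom.mem_ker, Matrix.cons_val_zero, Matrix.cons_val_one]
  have := hker hmem
  rw [RingHom.mem_ker] at this
  simp [hφ] at this

lemma s7_pow (hβ : β ≠ 0) : ∀ i : ℕ, 3 ≤ i →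
    (Ideal.span {Q (X 0), Q (X 1), Q (X 2)}) ^ i = Ideal.span {(Q (X 2)) ^ i} := by
  have hz : ∀ w : MvPolynomial (Fin 3) k ⧸ stmt7Ideal α β, ∀ j : ℕ, w = 0 →
      w ∈ Ideal.span {(Q (X 2)) ^ j} := fun w j h => h ▸ zero_mem _
  intro i hi
  induction i, hi using Nat.le_induction with
  | base =>
    apply le_antisymm
    · set S : Set (MvPolynomial (Fin 3) k ⧸ stmt7Ideal α β) :=
        {Q (X 0), Q (X 1), Q (X 2)} with hS
      have h3 : (Ideal.span S) ^ 3 = Ideal.span ((S * S) * S) := by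
        rw [pow_succ, pow_succ, pow_one, Ideal.span_mul_span', Ideal.span_mul_span']
      rw [h3, Ideal.span_le]
      rintro w hw
      obtain ⟨u, hu, r, hr, rfl⟩ := Set.mem_mul.1 hw
      obtain ⟨p, hp, q, hq, rfl⟩ := Set.mem_mul.1 hu
      simp only [hS, Set.mem_insert_iff, Set.mem_singleton_iff] at hp hq hr
      have M := s7_mono α β hβ
      rcases hp with rfl | rfl | rfl <;> rcases hq with rfl | rfl | rfl <;>
          rcases hr with rfl | rfl | rfl <;>
        first
          | (refine Ideal.mem_span_singleton.2 ⟨1, ?_⟩; ring1)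
          | (refine hz _ 3 ?_; linear_combination M 3 0 0 (by norm_num) (by norm_num))
          | (refine hz _ 3 ?_; linear_combination M 2 1 0 (by norm_num) (by norm_num))
          | (refine hz _ 3 ?_; linear_combination M 2 0 1 (by norm_num) (by norm_num))
          | (refine hz _ 3 ?_; linear_combination M 1 2 0 (by norm_num) (by norm_num))
          | (refine hz _ 3 ?_; linear_combination M 1 1 1 (by norm_num) (by norm_num))
          | (refine hz _ 3 ?_; linear_combination M 1 0 2 (by norm_num) (by norm_num))
          | (refine hz _ 3 ?_; linear_combination M 0 3 0 (by norm_num) (by norm_num))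
          | (refine hz _ 3 ?_; linear_combination M 0 2 1 (by norm_num) (by norm_num))
          | (refine hz _ 3 ?_; linear_combination M 0 1 2 (by norm_num) (by norm_num))
    · rw [Ideal.span_le, Set.singleton_subset_iff]
      exact Ideal.pow_mem_pow (Ideal.subset_span (by simp)) 3
  | succ i hi ih =>
    rw [pow_succ (M := Ideal (MvPolynomial (Fin 3) k ⧸ stmt7Ideal α β)), ih, Ideal.span_mul_span']
    apply le_antisymm
    · rw [Ideal.span_le]
      rintro w hw
      obtain ⟨u, hu, r, hr, rfl⟩ := Set.mem_mul.1 hw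
      simp only [Set.mem_singleton_iff] at hu
      subst hu
      simp only [Set.mem_insert_iff, Set.mem_singleton_iff] at hr
      obtain ⟨j, rfl⟩ : ∃ j, i = j + 3 := ⟨i - 3, by omega⟩
      rcases hr with rfl | rfl | rfl
      · exact hz _ _ (by linear_combination (Q (X 2)) ^ (j + 1) * s7_hxz2 α β hβ)
      · exact hz _ _ (by linear_combination (Q (X 2)) ^ (j + 1) * s7_hyz2 α β hβ)
      · exact Ideal.mem_span_singleton.2 ⟨1, by ring⟩
    · rw [Ideal.span_le, Set.singleton_subset_iff]
      exact Ideal.subset_span ⟨(Q (X 2)) ^ i, rfl, Q (X 2), by simp, (pow_succ _ i).symm⟩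


lemma s7_piece (hβ : β ≠ 0) (i : ℕ) (hi : 3 ≤ i) :
    stmt7Piece α β i = Submodule.span k {(Q (X 2)) ^ i} := by
  apply le_antisymm
  · rintro w ⟨p, hp, rfl⟩
    have hp' : p.IsHomogeneous i := hp
    simp only [AlgHom.toLinearMap_apply, Ideal.Quotient.mkₐ_eq_mk]
    rw [p.as_sum, map_sum]
    refine Submodule.sum_mem _ fun d hd => ?_
    have h1 := hp' (MvPolynomial.mem_support_iff.1 hd)
    have hdeg : d 0 + d 1 + d 2 = i := by
      rw [← h1]
      simp [Finsupp.weight_apply, Finsupp.sum_fintype, Fin.sum_univ_three]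
    have hmon : (monomial d) (coeff d p) =
        C (coeff d p) * (X 0 ^ d 0 * X 1 ^ d 1 * X 2 ^ d 2) := by
      rw [monomial_eq, Finsupp.prod_fintype _ _ (fun j => pow_zero _), Fin.prod_univ_three]
    rw [hmon, map_mul, map_mul, map_mul, map_pow, map_pow, map_pow]
    rcases Nat.eq_zero_or_pos (d 0 + d 1) with h0 | h0
    · obtain ⟨hd0, hd1⟩ : d 0 = 0 ∧ d 1 = 0 := by omega
      have hd2 : d 2 = i := by omega
      rw [hd0, hd1, hd2, pow_zero, pow_zero, one_mul, one_mul]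
      refine Submodule.mem_span_singleton.2 ⟨coeff d p, ?_⟩
      have halg : Q (C (coeff d p)) = algebraMap k _ (coeff d p) := by
        rw [← Ideal.Quotient.mkₐ_eq_mk (R₁ := k), ← MvPolynomial.algebraMap_eq,
          (Ideal.Quotient.mkₐ k (stmt7Ideal α β)).commutes]
      rw [halg, ← Algebra.smul_def]
    · have hzero := s7_mono α β hβ (d 0) (d 1) (d 2) (by omega) h0
      convert (Submodule.span k {(Q (X 2)) ^ i}).zero_mem using 1
      linear_combination Q (C (coeff d p)) * hzero
  · rw [Submodule.span_le, Set.singleton_subset_iff]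
    refine ⟨X 2 ^ i, ?_, ?_⟩
    · show (X 2 ^ i : MvPolynomial (Fin 3) k).IsHomogeneous i
      simpa using (isHomogeneous_X k (2 : Fin 3)).pow i
    · simp [Ideal.Quotient.mkₐ_eq_mk]

end Aux

/-- Let `k` be a field of characteristic `2`, `β ≠ 0`, and
`R = k[x,y,z]/(xy, x² - yz, y² - αyz - βxz)`.  Then `m^i = (z^i)` for all `i ≥ 3`,
and `dim_k R_i = 1` for all `i ≥ 3`. -/
theorem stmt_7 {k : Type*} [Field k] [CharP k 2] (α β : k) (hβ : β ≠ 0) :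
    ∀ i : ℕ, 3 ≤ i →
      (Ideal.span {Ideal.Quotient.mk (stmt7Ideal α β) (X 0),
          Ideal.Quotient.mk (stmt7Ideal α β) (X 1),
          Ideal.Quotient.mk (stmt7Ideal α β) (X 2)}) ^ i =
        Ideal.span {(Ideal.Quotient.mk (stmt7Ideal α β) (X 2)) ^ i} ∧
      Module.finrank k (stmt7Piece α β i) = 1 := by
  intro i hi
  refine ⟨s7_pow α β hβ i hi, ?_⟩
  rw [s7_piece α β hβ i hi]
  exact finrank_span_singleton (s7_zpow_ne α β i)
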